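/- arXiv:1201.4233 — 2 statements merged into one kernel-verified Lean document; each statement's English description precedes it below -/
import Mathlib

section
/- (Choquet's lemma) Let (f_α)_{α∈A} be a family of functions on a second-countable topological space X that is locally uniformly bounded above. Then there exists a countable subfamily (f_{α_k})_{k∈ℕ} such that the regularized upper envelope of (f_{α_k}) equals the regularized upper envelope of the full family (f_α). -/
open Filter Topology

private lemma exists_seq_iSup_aux {A : Type*} [Nonempty A] (g : A → EReal) :
    ∃ t : ℕ → A, ⨆ m, g (t m) = ⨆ a, g a := by
  obtain ⟨u, hmono, htend, hmem⟩ :=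
    exists_seq_tendsto_sSup (S := Set.range g) (Set.range_nonempty g) (OrderTop.bddAbove _)
  choose t ht using hmem
  refine ⟨t, ?_⟩
  have h1 : Tendsto u atTop (𝓝 (⨆ m, u m)) := tendsto_atTop_iSup hmono
  have h2 : (⨆ m, u m) = sSup (Set.range g) := tendsto_nhds_unique h1 htend
  calc ⨆ m, g (t m) = ⨆ m, u m := by simp [ht]
    _ = sSup (Set.range g) := h2
    _ = ⨆ a, g a := sSup_range

/-- Choquet's lemma: for a family `(f_a)` of functions on a second-countable
topological space, locally uniformly bounded above, there is a countable
subfamily whose regularized upper envelope equals that of the whole family. -/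
theorem stmt9 {X : Type*} [TopologicalSpace X] [SecondCountableTopology X]
    {A : Type*} [Nonempty A] (f : A → X → EReal)
    (hbdd : ∀ x : X, ∃ U ∈ 𝓝 x, ∃ M : ℝ, ∀ a, ∀ y ∈ U, f a y ≤ (M : EReal)) :
    ∃ α : ℕ → A, ∀ z : X,
      limsup (fun w => ⨆ k, f (α k) w) (𝓝 z) =
        limsup (fun w => ⨆ a, f a w) (𝓝 z) := by
  cases isEmpty_or_nonempty X with
  | inl h => exact ⟨fun _ => Classical.arbitrary A, fun z => isEmptyElim z⟩
  | inr hX =>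
  obtain ⟨b, hbc, -, hbasis⟩ := TopologicalSpace.exists_countable_basis X
  have hbne : b.Nonempty := by
    obtain ⟨x⟩ := hX
    obtain ⟨t, htb, hxt, -⟩ := hbasis.mem_nhds_iff.mp (Filter.univ_mem (f := 𝓝 x))
    exact ⟨t, htb⟩
  obtain ⟨B, hB⟩ := (Set.Countable.exists_eq_range hbc hbne)
  -- for each n, pick a countable subfamily achieving the sup over B n
  have key : ∀ n : ℕ, ∃ t : ℕ → A,
      (⨆ m, ⨆ w ∈ B n, f (t m) w) = ⨆ a, ⨆ w ∈ B n, f a w :=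
    fun n => exists_seq_iSup_aux (fun a => ⨆ w ∈ B n, f a w)
  choose t ht using key
  refine ⟨fun k => t k.unpair.1 k.unpair.2, fun z => ?_⟩
  -- for each basic set, the sup of the subfamily equals the sup of the family
  have hsup : ∀ n : ℕ, (⨆ w ∈ B n, ⨆ k : ℕ, f (t k.unpair.1 k.unpair.2) w)
      = ⨆ w ∈ B n, ⨆ a, f a w := by
    intro n
    apply le_antisymm
    · exact iSup_mono fun w => iSup_mono fun hw =>
        iSup_le fun k => le_iSup (fun a => f a w) _
    · refine iSup_le fun w => iSup_le fun hw => iSup_le fun a => ?_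
      have h2 : (⨆ m : ℕ, ⨆ w ∈ B n, f (t n m) w)
          ≤ ⨆ w ∈ B n, ⨆ k : ℕ, f (t k.unpair.1 k.unpair.2) w := by
        refine iSup_le fun m => iSup_le fun w => iSup_le fun hw => ?_
        refine le_trans ?_
          (le_iSup₂ (f := fun w (_ : w ∈ B n) => ⨆ k : ℕ, f (t k.unpair.1 k.unpair.2) w) w hw)
        have h3 := le_iSup (fun k : ℕ => f (t (Nat.unpair k).1 (Nat.unpair k).2) w)
          (Nat.pair n m)
        simpa using h3
      calc f a w ≤ ⨆ w ∈ B n, f a w := le_iSup₂ (f := fun w (_ : w ∈ B n) => f a w) w hw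
        _ ≤ ⨆ a, ⨆ w ∈ B n, f a w := le_iSup (fun a => ⨆ w ∈ B n, f a w) a
        _ = ⨆ m : ℕ, ⨆ w ∈ B n, f (t n m) w := (ht n).symm
        _ ≤ _ := h2
  rw [hbasis.nhds_hasBasis.limsup_eq_iInf_iSup, hbasis.nhds_hasBasis.limsup_eq_iInf_iSup]
  refine iInf_congr fun U => iInf_congr fun hU => ?_
  obtain ⟨hUb, -⟩ := hU
  obtain ⟨n, rfl⟩ : ∃ n, U = B n := by
    have : U ∈ Set.range B := hB ▸ hUb
    obtain ⟨n, hn⟩ := this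
    exact ⟨n, hn.symm⟩
  exact hsup n
end

section
/- Let μ_m, μ be finite positive Borel measures on a locally compact Hausdorff space Z such that μ_m → μ weakly on an open subset U ⊆ Z with μ(Z \ U) = 0 and μ_m(Z \ U) = 0 for all m, and suppose additionally limsup_m μ_m(Z) ≤ μ(Z). Then μ_m → μ weakly on all of Z. -/
open MeasureTheory Filter Topology

/-- Mass comparison upgrades weak convergence off a negligible closed complement to
global weak convergence: if the finite measures `μ_m`, `μ` give no mass to `Z \ U`,
`μ_m → μ` weakly on `U` (tested against nonnegative continuous compactly supported
functions supported in `U`), and `limsup μ_m(Z) ≤ μ(Z)`, then `μ_m → μ` weakly on `Z`. -/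
theorem stmt18 {Z : Type*} [TopologicalSpace Z] [LocallyCompactSpace Z]
    [T2Space Z] [SecondCountableTopology Z] [MeasurableSpace Z] [BorelSpace Z]
    (μm : ℕ → Measure Z) (μ : Measure Z)
    [∀ m, IsFiniteMeasure (μm m)] [IsFiniteMeasure μ]
    (U : Set Z) (hU : IsOpen U)
    (hμ : μ Uᶜ = 0) (hμm : ∀ m, μm m Uᶜ = 0)
    (hweakU : ∀ h : Z → ℝ, Continuous h → HasCompactSupport h → (∀ z, 0 ≤ h z) →
      tsupport h ⊆ U →
      Tendsto (fun m => ∫ z, h z ∂(μm m)) atTop (𝓝 (∫ z, h z ∂μ)))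
    (hmass : limsup (fun m => μm m Set.univ) atTop ≤ μ Set.univ) :
    ∀ h : Z → ℝ, Continuous h → HasCompactSupport h → (∀ z, 0 ≤ h z) →
      Tendsto (fun m => ∫ z, h z ∂(μm m)) atTop (𝓝 (∫ z, h z ∂μ)) := by
  intro h hcont hsupp hpos
  obtain ⟨C0, hC0⟩ := hcont.bounded_above_of_compact_support hsupp
  set C : ℝ := max C0 0 with hCdef
  have hCnonneg : (0:ℝ) ≤ C := le_max_right _ _
  have hhC : ∀ z, h z ≤ C := fun z =>
    le_trans (le_trans (le_abs_self _) (by simpa [Real.norm_eq_abs] using hC0 z))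
      (le_max_left _ _)
  rw [Metric.tendsto_atTop]
  intro ε hε
  set η : ℝ := ε / (5 * (C + 1)) with hηdef
  have hηpos : 0 < η := div_pos hε (by positivity)
  have hηε : 5 * (C + 1) * η = ε := by
    rw [hηdef]; field_simp
  -- compact `K ⊆ U` capturing almost all the mass of `μ`
  obtain ⟨K, hKU, hK, hμUK⟩ := hU.measurableSet.exists_isCompact_diff_lt
    (measure_ne_top μ U) ((ENNReal.ofReal_pos.2 hηpos).ne')
  obtain ⟨L, hL, hKL, hLU⟩ := exists_compact_between hK hU hKU
  obtain ⟨f, hf1, hf0, hfc, hf01⟩ := exists_continuous_one_zero_of_isCompact hK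
    isOpen_interior.isClosed_compl (Set.disjoint_left.mpr fun z hz hz' => hz' (hKL hz))
  have hsuppf : tsupport f ⊆ U := by
    have hfL : Function.support f ⊆ L := by
      intro z hz
      by_contra hzL
      exact hz (hf0 fun hi => hzL (interior_subset hi))
    exact (closure_minimal hfL hL.isClosed).trans hLU
  have hgc : HasCompactSupport fun z => h z * f z := hsupp.mul_right
  have hgcont : Continuous fun z => h z * f z := hcont.mul f.continuous
  have hgpos : ∀ z, 0 ≤ h z * f z := fun z => mul_nonneg (hpos z) (hf01 z).1
  have hgsupp : tsupport (fun z => h z * f z) ⊆ U :=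
    (tsupport_mul_subset_right).trans hsuppf
  -- key estimate for any finite measure
  have key : ∀ (ν : Measure Z), IsFiniteMeasure ν →
      (∫ z, h z ∂ν - ∫ z, h z * f z ∂ν ≤ C * (ν Set.univ).toReal - C * ∫ z, f z ∂ν ∧
       0 ≤ ∫ z, h z ∂ν - ∫ z, h z * f z ∂ν) := by
    intro ν hν
    have hih : Integrable h ν := hcont.integrable_of_hasCompactSupport hsupp
    have hig : Integrable (fun z => h z * f z) ν := hgcont.integrable_of_hasCompactSupport hgc
    have hif : Integrable (⇑f) ν := f.continuous.integrable_of_hasCompactSupport hfc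
    constructor
    · rw [← integral_sub hih hig]
      have hle : ∫ z, (h z - h z * f z) ∂ν ≤ ∫ z, (C - C * f z) ∂ν := by
        apply integral_mono (hih.sub hig) ((integrable_const C).sub (hif.const_mul C))
        intro z
        show h z - h z * f z ≤ C - C * f z
        have h1 : h z - h z * f z = h z * (1 - f z) := by ring
        have h2 : C - C * f z = C * (1 - f z) := by ring
        rw [h1, h2]
        exact mul_le_mul_of_nonneg_right (hhC z) (by linarith [(hf01 z).2])
      have heq : ∫ z, (C - C * f z) ∂ν = C * (ν Set.univ).toReal - C * ∫ z, f z ∂ν := by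
        rw [integral_sub (integrable_const C) (hif.const_mul C), integral_const,
          integral_const_mul, smul_eq_mul, mul_comm, Measure.real]
      rw [heq] at hle
      exact hle
    · rw [sub_nonneg]
      exact integral_mono hig hih fun z => mul_le_of_le_one_right (hpos z) (hf01 z).2
  -- `∫ f dμ` is close to the full mass of `μ`
  have hfK : (μ K).toReal ≤ ∫ z, f z ∂μ := by
    have hKint : Integrable (Set.indicator K fun _ => (1:ℝ)) μ :=
      (integrable_const 1).indicator hK.measurableSet
    have hif : Integrable (⇑f) μ := f.continuous.integrable_of_hasCompactSupport hfc
    have hmono := integral_mono hKint hif (fun z => by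
      by_cases hz : z ∈ K
      · simp [Set.indicator_of_mem hz, hf1 hz]
      · simp [Set.indicator_of_notMem hz, (hf01 z).1])
    rwa [integral_indicator_const (1:ℝ) hK.measurableSet, smul_eq_mul, mul_one] at hmono
  have hKcompl : μ Kᶜ ≤ ENNReal.ofReal η := by
    have hsub : Kᶜ ⊆ (U \ K) ∪ Uᶜ := by
      intro z hz
      by_cases h' : z ∈ U
      · exact Or.inl ⟨h', hz⟩
      · exact Or.inr h'
    calc μ Kᶜ ≤ μ ((U \ K) ∪ Uᶜ) := measure_mono hsub
      _ ≤ μ (U \ K) + μ Uᶜ := measure_union_le _ _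
      _ ≤ ENNReal.ofReal η := by rw [hμ, add_zero]; exact hμUK.le
  have hmassK : (μ Set.univ).toReal ≤ (μ K).toReal + η := by
    have h1 : μ Set.univ ≤ μ K + ENNReal.ofReal η := by
      calc μ Set.univ = μ (K ∪ Kᶜ) := by rw [Set.union_compl_self]
        _ ≤ μ K + μ Kᶜ := measure_union_le _ _
        _ ≤ μ K + ENNReal.ofReal η := by gcongr
    calc (μ Set.univ).toReal ≤ (μ K + ENNReal.ofReal η).toReal :=
          ENNReal.toReal_mono (by finiteness) h1
      _ = (μ K).toReal + η := by
          rw [ENNReal.toReal_add (measure_ne_top μ K) ENNReal.ofReal_ne_top,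
            ENNReal.toReal_ofReal hηpos.le]
  have hfμ : (μ Set.univ).toReal - η ≤ ∫ z, f z ∂μ := by linarith
  -- eventual bounds
  have hfT := hweakU (⇑f) f.continuous hfc (fun z => (hf01 z).1) hsuppf
  have hgT := hweakU (fun z => h z * f z) hgcont hgc hgpos hgsupp
  have hev1 : ∀ᶠ m in atTop, |(∫ z, f z ∂(μm m)) - ∫ z, f z ∂μ| < η := by
    have := Metric.tendsto_atTop.mp hfT η hηpos
    obtain ⟨N, hN⟩ := this
    exact Filter.eventually_atTop.2 ⟨N, fun m hm => by
      simpa [Real.dist_eq] using hN m hm⟩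
  have hev2 : ∀ᶠ m in atTop, |(∫ z, h z * f z ∂(μm m)) - ∫ z, h z * f z ∂μ| < η := by
    obtain ⟨N, hN⟩ := Metric.tendsto_atTop.mp hgT η hηpos
    exact Filter.eventually_atTop.2 ⟨N, fun m hm => by
      simpa [Real.dist_eq] using hN m hm⟩
  have hev3 : ∀ᶠ m in atTop, ((μm m) Set.univ).toReal ≤ (μ Set.univ).toReal + η := by
    have hlt : limsup (fun m => μm m Set.univ) atTop < μ Set.univ + ENNReal.ofReal η :=
      lt_of_le_of_lt hmass
        (ENNReal.lt_add_right (measure_ne_top μ _) (ENNReal.ofReal_pos.2 hηpos).ne')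
    filter_upwards [Filter.eventually_lt_of_limsup_lt hlt] with m hm
    calc ((μm m) Set.univ).toReal ≤ (μ Set.univ + ENNReal.ofReal η).toReal :=
          ENNReal.toReal_mono (by finiteness) hm.le
      _ = (μ Set.univ).toReal + η := by
          rw [ENNReal.toReal_add (measure_ne_top μ _) ENNReal.ofReal_ne_top,
            ENNReal.toReal_ofReal hηpos.le]
  obtain ⟨N, hN⟩ := Filter.eventually_atTop.1 ((hev1.and hev2).and hev3)
  refine ⟨N, fun m hm => ?_⟩
  obtain ⟨⟨hm1, hm2⟩, hm3⟩ := hN m hm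
  obtain ⟨hkey1, hkey2⟩ := key (μm m) inferInstance
  obtain ⟨hkey3, hkey4⟩ := key μ inferInstance
  -- the lower bound on `∫ f dμm`
  have hfm : (μ Set.univ).toReal - 2 * η ≤ ∫ z, f z ∂(μm m) := by
    have := (abs_lt.1 hm1).1
    linarith
  have hT1 : ∫ z, h z ∂(μm m) - ∫ z, h z * f z ∂(μm m) ≤ C * (3 * η) := by
    have := mul_le_mul_of_nonneg_left hfm hCnonneg
    have h2 := mul_le_mul_of_nonneg_left hm3 hCnonneg
    nlinarith
  have hT3 : ∫ z, h z ∂μ - ∫ z, h z * f z ∂μ ≤ C * η := by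
    have := mul_le_mul_of_nonneg_left hfμ hCnonneg
    nlinarith
  have hm2' := abs_lt.1 hm2
  rw [Real.dist_eq, abs_sub_lt_iff]
  constructor
  · nlinarith
  · nlinarith
end
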